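/- Let S be a left cancellative monoid and R a ring with a finite S-grading of support size d. If R_e is nilpotent of index r > 1 (i.e., (R_e)^r = 0), then R is nilpotent with r ≤ nd(R) ≤ dr; if r = 1 (R_e = 0), then nd(R) ≤ d + 1. -/

import Mathlib

/-- Product `a * l₀ * l₁ * ⋯` of a nonempty list of ring elements. -/
def mulList {R : Type*} [Mul R] (a : R) (l : List R) : R := l.foldl (· * ·) a

/-- `pw a n` is `aⁿ` for `n ≥ 1` (junk value `0` at `n = 0`). -/
def pw {R : Type*} [Mul R] [Zero R] (a : R) : ℕ → R
  | 0 => 0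
  | 1 => a
  | n + 2 => pw a (n + 1) * a

/-- Product of `n` elements given by `f` (junk `0` when `n = 0`). -/
def finProd {R : Type*} [Mul R] [Zero R] : {n : ℕ} → (Fin n → R) → R
  | 0, _ => 0
  | n + 1, f => mulList (f 0) (List.ofFn fun i : Fin n => f i.succ)

/-- `R ^ n = 0`: every product of `n` elements of `R` vanishes. -/
def PowZero (R : Type*) [Mul R] [Zero R] (n : ℕ) : Prop :=
  ∀ (a : R) (l : List R), l.length + 1 = n → mulList a l = 0

/-- `T ^ n = 0` for a subset `T` of a ring. -/
def PowZeroOn {R : Type*} [Mul R] [Zero R] (T : Set R) (n : ℕ) : Prop :=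
  ∀ (a : R) (l : List R), a ∈ T → (∀ x ∈ l, x ∈ T) → l.length + 1 = n → mulList a l = 0

/-- `a` is nilpotent: `aⁿ = 0` for some `n ≥ 1`. -/
def IsNilE {R : Type*} [Mul R] [Zero R] (a : R) : Prop := ∃ n, 1 ≤ n ∧ pw a n = 0

/-- A nil ring: every element is nilpotent. -/
def IsNilRing (R : Type*) [Mul R] [Zero R] : Prop := ∀ a : R, IsNilE a

/-- An `S`-grading of the ring `R`: a direct sum decomposition into additive
subgroups with `R_g R_h ⊆ R_{gh}`. -/
structure IsGrading {S R : Type*} [Monoid S] [NonUnitalRing R] [DecidableEq S]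
    (A : S → AddSubgroup R) : Prop where
  mul_mem : ∀ {g h : S} {x y : R}, x ∈ A g → y ∈ A h → x * y ∈ A (g * h)
  isInternal : DirectSum.IsInternal A

/-- Grading by an additively written monoid. -/
structure IsAddGrading {S R : Type*} [AddMonoid S] [NonUnitalRing R] [DecidableEq S]
    (A : S → AddSubgroup R) : Prop where
  mul_mem : ∀ {g h : S} {x y : R}, x ∈ A g → y ∈ A h → x * y ∈ A (g + h)
  isInternal : DirectSum.IsInternal A

/-- The subset `T` of a ring is `f`-commutative: there are a semigroup `G` acting on it
from the left and a map `f` with `a*b = f(a,b)·(b*a)`. -/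
def IsFCommutativeOn {R : Type*} [Mul R] (T : Set R) : Prop :=
  ∃ (G : Type) (_ : Semigroup G) (act : G → R → R),
    (∀ l m : G, ∀ x : R, x ∈ T → act (l * m) x = act l (act m x)) ∧
    (∀ l : G, ∀ x : R, x ∈ T → act l x ∈ T) ∧
    (∀ l : G, ∀ x y : R, x ∈ T → y ∈ T → act l (x * y) = act l x * y) ∧
    ∃ f : R → R → G, ∀ a b : R, a ∈ T → b ∈ T → a * b = act (f a b) (b * a)

/-- The ring `R` is `f`-commutative. -/
def IsFCommutative (R : Type*) [Mul R] : Prop :=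
  ∃ (G : Type) (_ : Semigroup G) (act : G → R → R),
    (∀ l m : G, ∀ x : R, act (l * m) x = act l (act m x)) ∧
    (∀ l : G, ∀ x y : R, act l (x * y) = act l x * y) ∧
    ∃ f : R → R → G, ∀ a b : R, a * b = act (f a b) (b * a)

/-- The order of `g`: least `n ≥ 1` with `gⁿ = 1`, and `0` if no such `n` exists. -/
noncomputable def ordOf {S : Type*} [Monoid S] (g : S) : ℕ := sInf {n | 1 ≤ n ∧ g ^ n = 1}

namespace Stmt8Aux

variable {R : Type*} [NonUnitalRing R]

lemma mulList_cons (a x : R) (l : List R) : mulList a (x :: l) = mulList (a * x) l := rfl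

lemma mulList_append (a : R) (l₁ l₂ : List R) :
    mulList a (l₁ ++ l₂) = mulList (mulList a l₁) l₂ := List.foldl_append ..

lemma mulList_zero (l : List R) : mulList (0 : R) l = 0 := by
  induction l with
  | nil => rfl
  | cons x xs ih => rw [mulList_cons, zero_mul]; exact ih

lemma mul_mulList (a x : R) (l : List R) : a * mulList x l = mulList (a * x) l := by
  induction l generalizing x with
  | nil => rfl
  | cons y ys ih => rw [mulList_cons, mulList_cons, ih, mul_assoc]

/-- headless product -/
def mulListAll : List R → R
  | [] => 0
  | x :: xs => mulList x xs

/-- prefix degrees -/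
def prefs {S : Type*} [Mul S] : S → List S → List S
  | _, [] => []
  | b, g :: G => (b * g) :: prefs (b * g) G

lemma prefs_length {S : Type*} [Mul S] (b : S) (G : List S) :
    (prefs b G).length = G.length := by
  induction G generalizing b with
  | nil => rfl
  | cons g G ih => simp [prefs, ih]

section Master
variable {S : Type*} [Monoid S] [IsLeftCancelMul S] [DecidableEq S]
variable (A : S → AddSubgroup R)

lemma master (hmul : ∀ {g h : S} {x y : R}, x ∈ A g → y ∈ A h → x * y ∈ A (g * h)) :
    ∀ (l : List R) (G : List S) (b q : S) (m : ℕ),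
      List.Forall₂ (fun x g => x ∈ A g) l G → 1 ≤ m → m ≤ (prefs b G).count q →
      ∃ (c : R) (h : S) (t rest : List R), c ∈ A h ∧ b * h = q ∧
        (∀ x ∈ t, x ∈ A (1 : S)) ∧ t.length + 1 = m ∧
        (∀ e : R, mulList e l = mulList e (c :: (t ++ rest))) ∧
        mulListAll l = mulList c (t ++ rest) := by
  intro l
  induction l with
  | nil =>
    intro G b q m hf hm hcnt
    cases hf
    simp [prefs] at hcnt
    omega
  | cons x l' ih =>
    intro G b q m hf hm hcnt
    obtain ⟨g, G', hx, hf', rfl⟩ : ∃ g G', x ∈ A g ∧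
        List.Forall₂ (fun x g => x ∈ A g) l' G' ∧ G = g :: G' := by
      cases hf with | cons h1 h2 => exact ⟨_, _, h1, h2, rfl⟩
    rw [prefs, List.count_cons] at hcnt
    by_cases hbg : b * g = q
    · rcases Nat.lt_or_ge m 2 with hm1 | hm2
      · -- m = 1
        have : m = 1 := by omega
        subst this
        exact ⟨x, g, [], l', hx, hbg, by simp, rfl, fun e => rfl, rfl⟩
      · -- m ≥ 2
        have hcnt' : m - 1 ≤ (prefs (b * g) G').count q := by
          split at hcnt <;> omega
        obtain ⟨c', h', t', rest', hc', hbh', ht', hlen', Eq1', Eq2'⟩ :=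
          ih G' (b * g) q (m - 1) hf' (by omega) hcnt'
        have hh1 : h' = 1 := by
          apply mul_left_cancel (a := q)
          rw [mul_one, ← hbg, hbh', hbg]
        refine ⟨x, g, c' :: t', rest', hx, hbg, ?_, by simpa using (by omega : t'.length + 2 = m),
          ?_, ?_⟩
        · intro y hy
          rcases List.mem_cons.mp hy with rfl | hy
          · rw [← hh1]; exact hc'
          · exact ht' y hy
        · intro e
          rw [mulList_cons, Eq1' (e * x)]
          rfl
        · show mulList x l' = _
          rw [Eq1' x]
          rfl
    · have hcnt' : m ≤ (prefs (b * g) G').count q := by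
        have : ¬ ((b * g) == q) = true := by simpa using hbg
        rw [if_neg this] at hcnt
        omega
      obtain ⟨c', h', t, rest, hc', hbh', ht, hlen, Eq1', Eq2'⟩ :=
        ih G' (b * g) q m hf' hm hcnt'
      refine ⟨x * c', g * h', t, rest, hmul hx hc', by rw [← mul_assoc, hbh'], ht, hlen, ?_, ?_⟩
      · intro e
        rw [mulList_cons, Eq1' (e * x)]
        show mulList (e * x * c') (t ++ rest) = mulList (e * (x * c')) (t ++ rest)
        rw [mul_assoc]
      · exact Eq1' x

set_option linter.unusedSectionVars false in
lemma prefzero (hmul : ∀ {g h : S} {x y : R}, x ∈ A g → y ∈ A h → x * y ∈ A (g * h)) :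
    ∀ (l : List R) (G : List S) (c : R) (b : S), c ∈ A b →
      List.Forall₂ (fun x g => x ∈ A g) l G →
      (∃ p ∈ prefs b G, A p = ⊥) → mulList c l = 0 := by
  intro l
  induction l with
  | nil =>
    intro G c b _ hf hp
    cases hf
    simp [prefs] at hp
  | cons x l' ih =>
    intro G c b hc hf hp
    obtain ⟨g, G', hx, hf', rfl⟩ : ∃ g G', x ∈ A g ∧
        List.Forall₂ (fun x g => x ∈ A g) l' G' ∧ G = g :: G' := by
      cases hf with | cons h1 h2 => exact ⟨_, _, h1, h2, rfl⟩
    rw [mulList_cons]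
    rcases hp with ⟨p, hpmem, hpbot⟩
    rw [prefs] at hpmem
    rcases List.mem_cons.mp hpmem with rfl | hpmem
    · have hmem : c * x ∈ A (b * g) := hmul hc hx
      rw [hpbot, AddSubgroup.mem_bot] at hmem
      rw [hmem, mulList_zero]
    · exact ih G' (c * x) (b * g) (hmul hc hx) hf' ⟨p, hpmem, hpbot⟩

end Master


lemma pigeon {α : Type*} [DecidableEq α] (T : Finset α) (L : List α) (k : ℕ)
    (hmem : ∀ x ∈ L, x ∈ T) (hlen : T.card * k < L.length) :
    ∃ q, k + 1 ≤ L.count q := by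
  by_contra hc
  push_neg at hc
  have hsub : (L : Multiset α).toFinset ⊆ T := by
    intro x hx
    exact hmem x (by simpa using hx)
  have h1 : L.length = ∑ a ∈ (L : Multiset α).toFinset, L.count a := by
    have := Multiset.toFinset_sum_count_eq (L : Multiset α)
    simpa [Multiset.coe_count] using this.symm
  have h2 : ∑ a ∈ (L : Multiset α).toFinset, L.count a ≤ ∑ a ∈ T, L.count a :=
    Finset.sum_le_sum_of_subset hsub
  have h3 : ∑ a ∈ T, L.count a ≤ ∑ _a ∈ T, k :=
    Finset.sum_le_sum fun a _ => by have := hc a; omega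
  rw [Finset.sum_const, smul_eq_mul] at h3
  omega

section Closure
variable {S : Type*} [Monoid S] [DecidableEq S] (A : S → AddSubgroup R)

lemma mem_closure_homog (hA : DirectSum.IsInternal A) (x : R) :
    x ∈ AddSubgroup.closure {y : R | ∃ g, y ∈ A g} := by
  obtain ⟨y, rfl⟩ := hA.surjective x
  induction y using DirectSum.induction_on with
  | zero => rw [map_zero]; exact zero_mem _
  | of i x =>
    rw [DirectSum.coeAddMonoidHom_of]
    exact AddSubgroup.subset_closure ⟨i, x.2⟩
  | add x y hx hy => rw [map_add]; exact add_mem hx hy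

lemma closure_mul_closure (T U : Set R) (V : AddSubgroup R)
    (h : ∀ t ∈ T, ∀ u ∈ U, t * u ∈ V) :
    ∀ x ∈ AddSubgroup.closure T, ∀ y ∈ AddSubgroup.closure U, x * y ∈ V := by
  intro x hx
  induction hx using AddSubgroup.closure_induction with
  | mem t htT =>
    intro y hy
    induction hy using AddSubgroup.closure_induction with
    | mem u huU => exact h t htT u huU
    | zero => rw [mul_zero]; exact zero_mem _
    | add u v _ _ hu hv => rw [mul_add]; exact add_mem hu hv
    | neg u _ hu => rw [mul_neg]; exact neg_mem hu
  | zero => intro y _; rw [zero_mul]; exact zero_mem _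
  | add a b _ _ ha hb => intro y hy; rw [add_mul]; exact add_mem (ha y hy) (hb y hy)
  | neg a _ ha => intro y hy; rw [neg_mul]; exact neg_mem (ha y hy)

/-- multilinear reduction: PowZero follows from the homogeneous case. -/
lemma homog_reduce (hA : IsGrading A) (n : ℕ)
    (h : ∀ (a : R) (l : List R) (g : S) (G : List S), a ∈ A g →
      List.Forall₂ (fun x g => x ∈ A g) l G → l.length + 1 = n → mulList a l = 0) :
    PowZero R n := by
  have hG : ∀ l : List R, (∀ x ∈ l, ∃ g, x ∈ A g) →
      ∃ G, List.Forall₂ (fun x g => x ∈ A g) l G := by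
    intro l
    induction l with
    | nil => exact fun _ => ⟨[], List.Forall₂.nil⟩
    | cons x xs ih =>
      intro hx
      obtain ⟨G, hGg⟩ := ih fun y hy => hx y (List.mem_cons_of_mem _ hy)
      obtain ⟨g, hg⟩ := hx x List.mem_cons_self
      exact ⟨g :: G, List.Forall₂.cons hg hGg⟩
  have key : ∀ (l : List R) (a : R),
      mulList a l ∈ AddSubgroup.closure {x : R | ∃ (a' : R) (l' : List R),
        (∃ g, a' ∈ A g) ∧ (∀ y ∈ l', ∃ g, y ∈ A g) ∧ l'.length = l.length ∧
        x = mulList a' l'} := by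
    intro l
    induction l using List.reverseRecOn with
    | nil =>
      intro a
      refine AddSubgroup.closure_mono ?_ (mem_closure_homog A hA.isInternal a)
      rintro x ⟨g, hg⟩
      exact ⟨x, [], ⟨g, hg⟩, by simp, rfl, rfl⟩
    | append_singleton xs b ih =>
      intro a
      rw [mulList_append]
      have hb := mem_closure_homog A hA.isInternal b
      refine closure_mul_closure _ _ _ ?_ (mulList a xs) (ih a) b hb
      rintro t ⟨a', l', ha', hl', hlen, rfl⟩ u ⟨g, hu⟩
      refine AddSubgroup.subset_closure ⟨a', l' ++ [u], ha', ?_, by simp [hlen], ?_⟩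
      · intro y hy
        rcases List.mem_append.mp hy with hy | hy
        · exact hl' y hy
        · rw [List.mem_singleton.mp hy]; exact ⟨g, hu⟩
      · rw [mulList_append]; rfl
  intro a l hlen
  have hk := key l a
  have hsub : {x : R | ∃ (a' : R) (l' : List R),
      (∃ g, a' ∈ A g) ∧ (∀ y ∈ l', ∃ g, y ∈ A g) ∧ l'.length = l.length ∧
      x = mulList a' l'} ⊆ ((⊥ : AddSubgroup R) : Set R) := by
    rintro x ⟨a', l', ⟨g, ha'⟩, hl', hlen', rfl⟩
    obtain ⟨G, hGg⟩ := hG l' hl'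
    have := h a' l' g G ha' hGg (by omega)
    simpa using this
  have := (AddSubgroup.closure_le (⊥ : AddSubgroup R)).mpr hsub hk
  simpa using this

end Closure

section Core
variable {S : Type*} [Monoid S] [IsLeftCancelMul S] [DecidableEq S] (A : S → AddSubgroup R)

lemma core1 (hA : IsGrading A) (d r : ℕ)
    (hfin : {g : S | A g ≠ ⊥}.Finite) (hcard : hfin.toFinset.card = d) (hr : 1 ≤ r)
    (hre : PowZeroOn (A 1 : Set R) r) (h1supp : A (1 : S) ≠ ⊥) :
    ∀ (a : R) (l : List R) (g : S) (G : List S), a ∈ A g →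
      List.Forall₂ (fun x g => x ∈ A g) l G → l.length + 1 = d * r → mulList a l = 0 := by
  intro a l g G hag hF hlen
  have hpr : prefs (1 : S) (g :: G) = g :: prefs g G := by rw [prefs, one_mul]
  by_cases hbot : ∃ p ∈ prefs (1 : S) (g :: G), A p = ⊥
  · rcases hbot with ⟨p, hp, hpbot⟩
    rw [hpr] at hp
    rcases List.mem_cons.mp hp with rfl | hp
    · have : a = 0 := by
        have := hag; rw [hpbot] at this; simpa using this
      rw [this, mulList_zero]
    · exact prefzero A hA.mul_mem l G a g hag hF ⟨p, hp, hpbot⟩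
  · push_neg at hbot
    have hGlen : (g :: G).length = d * r := by
      have := hF.length_eq
      simp only [List.length_cons]
      omega
    have h1mem : (1 : S) ∈ hfin.toFinset := hfin.mem_toFinset.mpr h1supp
    have hmemT : ∀ x ∈ (1 : S) :: prefs (1 : S) (g :: G), x ∈ hfin.toFinset := by
      intro x hx
      rcases List.mem_cons.mp hx with rfl | hx
      · exact h1mem
      · exact hfin.mem_toFinset.mpr (hbot x hx)
    obtain ⟨q, hq⟩ := pigeon hfin.toFinset ((1 : S) :: prefs (1 : S) (g :: G)) r hmemT
      (by simp [hcard, prefs_length, hGlen])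
    rw [List.count_cons] at hq
    have hFull : List.Forall₂ (fun x g => x ∈ A g) (a :: l) (g :: G) :=
      List.Forall₂.cons hag hF
    by_cases hq1 : q = 1
    · subst hq1
      have hcnt : r ≤ ((prefs (1 : S) (g :: G)).count 1) := by
        simp only [beq_self_eq_true, if_true] at hq
        omega
      obtain ⟨c, h, t, rest, hc, hbh, ht, hlenT, _, Eq2⟩ :=
        master A hA.mul_mem (a :: l) (g :: G) 1 1 r hFull hr hcnt
      rw [one_mul] at hbh
      have haL : mulList a l = mulList c (t ++ rest) := Eq2
      rw [haL, mulList_append, hre c t (hbh ▸ hc) ht hlenT, mulList_zero]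
    · have hcnt : r + 1 ≤ ((prefs (1 : S) (g :: G)).count q) := by
        have : ¬ ((1 : S) == q) = true := by simpa using fun h => hq1 h.symm
        rw [if_neg this] at hq
        omega
      obtain ⟨c, h, t, rest, hc, hbh, ht, hlenT, _, Eq2⟩ :=
        master A hA.mul_mem (a :: l) (g :: G) 1 q (r + 1) hFull (by omega) hcnt
      have htl : t.length = r := by omega
      obtain ⟨t₀, t₁, rfl⟩ : ∃ t₀ t₁, t = t₀ :: t₁ := by
        cases t with
        | nil => simp at htl; omega
        | cons t₀ t₁ => exact ⟨t₀, t₁, rfl⟩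
      have haL : mulList a l = mulList c ((t₀ :: t₁) ++ rest) := Eq2
      have hz : mulList t₀ t₁ = 0 :=
        hre t₀ t₁ (ht t₀ (by simp)) (fun x hx => ht x (by simp [hx]))
          (by simp at htl; omega)
      rw [haL, mulList_append]
      have : mulList c (t₀ :: t₁) = 0 := by
        rw [mulList_cons, ← mul_mulList, hz, mul_zero]
      rw [this, mulList_zero]

lemma core2 (hA : IsGrading A) (d : ℕ)
    (hfin : {g : S | A g ≠ ⊥}.Finite) (hcard : hfin.toFinset.card = d)
    (hA1 : ∀ x ∈ A (1 : S), x = (0 : R)) :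
    ∀ (a : R) (l : List R) (g : S) (G : List S), a ∈ A g →
      List.Forall₂ (fun x g => x ∈ A g) l G → l.length + 1 = d + 1 → mulList a l = 0 := by
  intro a l g G hag hF hlen
  have hpr : prefs (1 : S) (g :: G) = g :: prefs g G := by rw [prefs, one_mul]
  by_cases hbot : ∃ p ∈ prefs (1 : S) (g :: G), A p = ⊥
  · rcases hbot with ⟨p, hp, hpbot⟩
    rw [hpr] at hp
    rcases List.mem_cons.mp hp with rfl | hp
    · have : a = 0 := by
        have := hag; rw [hpbot] at this; simpa using this
      rw [this, mulList_zero]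
    · exact prefzero A hA.mul_mem l G a g hag hF ⟨p, hp, hpbot⟩
  · push_neg at hbot
    have hGlen : (g :: G).length = d + 1 := by
      have := hF.length_eq
      simp only [List.length_cons]
      omega
    have hmemT : ∀ x ∈ prefs (1 : S) (g :: G), x ∈ hfin.toFinset := fun x hx =>
      hfin.mem_toFinset.mpr (hbot x hx)
    obtain ⟨q, hq⟩ := pigeon hfin.toFinset (prefs (1 : S) (g :: G)) 1 hmemT
      (by simp [hcard, prefs_length, hGlen])
    have hFull : List.Forall₂ (fun x g => x ∈ A g) (a :: l) (g :: G) :=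
      List.Forall₂.cons hag hF
    obtain ⟨c, h, t, rest, hc, hbh, ht, hlenT, _, Eq2⟩ :=
      master A hA.mul_mem (a :: l) (g :: G) 1 q 2 hFull (by omega) hq
    obtain ⟨t₀, rfl⟩ : ∃ t₀, t = [t₀] := by
      cases t with
      | nil => simp at hlenT
      | cons t₀ t₁ =>
        cases t₁ with
        | nil => exact ⟨t₀, rfl⟩
        | cons a b => simp at hlenT
    have ht0 : t₀ = 0 := hA1 t₀ (ht t₀ (by simp))
    have haL : mulList a l = mulList c ([t₀] ++ rest) := Eq2
    rw [haL, ht0]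
    show mulList (c * 0) rest = 0
    rw [mul_zero, mulList_zero]

end Core


end Stmt8Aux

theorem stmt_8 {S R : Type*} [Monoid S] [IsLeftCancelMul S] [DecidableEq S]
    [NonUnitalRing R] (A : S → AddSubgroup R) (hA : IsGrading A)
    (d r : ℕ) (hfin : {g : S | A g ≠ ⊥}.Finite) (hcard : hfin.toFinset.card = d)
    (hr : 1 ≤ r)
    (hre : PowZeroOn (A 1 : Set R) r)
    (hmin : ∀ m, 1 ≤ m → m < r → ¬ PowZeroOn (A 1 : Set R) m) :
    (1 < r → PowZero R (d * r) ∧ ∀ m, 1 ≤ m → m < r → ¬ PowZero R m) ∧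
    (r = 1 → PowZero R (d + 1)) := by
  constructor
  · intro hr1
    refine ⟨?_, ?_⟩
    · have h1supp : A (1 : S) ≠ ⊥ := by
        intro hbot
        refine hmin 1 le_rfl hr1 ?_
        intro a l ha hl hlen
        have hl0 : l = [] := by
          cases l with
          | nil => rfl
          | cons x xs => simp at hlen
        subst hl0
        have : a = 0 := by rw [hbot] at ha; simpa using ha
        simpa [mulList] using this
      exact Stmt8Aux.homog_reduce A hA _
        (Stmt8Aux.core1 A hA d r hfin hcard hr hre h1supp)
    · intro m hm1 hmr hPZ
      exact hmin m hm1 hmr fun a l _ _ hlen => hPZ a l hlen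
  · intro hr1
    have hA1 : ∀ x ∈ A (1 : S), x = (0 : R) := by
      intro x hx
      have := hre x [] hx (by simp) (by simp [hr1])
      simpa [mulList] using this
    exact Stmt8Aux.homog_reduce A hA _ (Stmt8Aux.core2 A hA d hfin hcard hA1)
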